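/- Let ρ be a density matrix and C a Hermitian matrix with ρ·C = C·ρ. Let O⁺ be a matrix with [C, O⁺] = O⁺ and set O⁻ := (O⁺)†, O⁽²⁾ := (O⁺ − O⁻)/(2i). For a natural number k, set Z(k) := √(tr(ρ·(O⁻)^k·(O⁺)^k)) and assume Z(k) > 0 for all relevant k; define the functional χ^(m,m')(A) := tr(ρ·(O⁻)^{m'}·A·(O⁺)^m) / (Z(m)·Z(m')). Then for all natural numbers m, m': χ^(m,m')(O⁽²⁾) + χ^(m',m)(O⁽²⁾) = 0. In particular every real linear combination of the symmetrized functionals gives zero expectation to the order parameter O⁽²⁾. -/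

import Mathlib

open Matrix
open scoped ComplexOrder

/-- The normalization `Z(k) = √tr(ρ·(O⁻)^k·(O⁺)^k)`, where `O⁻ = (O⁺)†`. -/
noncomputable def ktZ {n : Type*} [Fintype n] [DecidableEq n]
    (ρ Op : Matrix n n ℂ) (k : ℕ) : ℝ :=
  Real.sqrt ((ρ * Opᴴ ^ k * Op ^ k).trace.re)

/-- The Koma–Tasaki functional `χ^(m,m')(A) = tr(ρ·(O⁻)^{m'}·A·(O⁺)^m)/(Z(m)·Z(m'))`. -/
noncomputable def ktChi {n : Type*} [Fintype n] [DecidableEq n]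
    (ρ Op : Matrix n n ℂ) (m m' : ℕ) (A : Matrix n n ℂ) : ℂ :=
  (ρ * Opᴴ ^ m' * A * Op ^ m).trace / ((ktZ ρ Op m * ktZ ρ Op m' : ℝ) : ℂ)

section Aux
variable {n : Type*} [Fintype n] [DecidableEq n]

private lemma kt_comm_mul (C A B : Matrix n n ℂ) (a b : ℂ)
    (hA : C * A - A * C = a • A) (hB : C * B - B * C = b • B) :
    C * (A * B) - (A * B) * C = (a + b) • (A * B) := by
  have h : C * (A * B) - (A * B) * C = (C * A - A * C) * B + A * (C * B - B * C) := by
    noncomm_ring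
  rw [h, hA, hB, add_smul, smul_mul_assoc, mul_smul_comm]

private lemma kt_comm_pow (C A : Matrix n n ℂ) (a : ℂ)
    (hA : C * A - A * C = a • A) (k : ℕ) :
    C * A ^ k - A ^ k * C = ((k : ℂ) * a) • A ^ k := by
  induction k with
  | zero => simp
  | succ k ih =>
    have h := kt_comm_mul C A (A ^ k) a ((k : ℂ) * a) hA ih
    rw [← pow_succ'] at h
    rw [h]
    congr 1
    push_cast
    ring

private lemma kt_trace_comm_zero (ρ C X : Matrix n n ℂ) (hρC : ρ * C = C * ρ)
    (c : ℂ) (hc : c ≠ 0) (hX : C * X - X * C = c • X) : (ρ * X).trace = 0 := by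
  have h0 : (ρ * (C * X - X * C)).trace = 0 := by
    rw [Matrix.mul_sub, Matrix.trace_sub, ← Matrix.mul_assoc, hρC,
      ← Matrix.mul_assoc, Matrix.trace_mul_cycle ρ X C, Matrix.mul_assoc, sub_self]
  rw [hX, Matrix.mul_smul, Matrix.trace_smul, smul_eq_mul, mul_eq_zero] at h0
  exact h0.resolve_left hc

private lemma kt_star_trace (ρ Op : Matrix n n ℂ) (hρ : ρᴴ = ρ) (j k : ℕ) :
    star ((ρ * (Opᴴ ^ j * Op ^ k)).trace) = (ρ * (Opᴴ ^ k * Op ^ j)).trace := by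
  rw [← Matrix.trace_conjTranspose]
  rw [Matrix.conjTranspose_mul, Matrix.conjTranspose_mul, Matrix.conjTranspose_pow,
    Matrix.conjTranspose_pow, Matrix.conjTranspose_conjTranspose, hρ,
    Matrix.trace_mul_comm]

private lemma kt_trace_zero (ρ C Op : Matrix n n ℂ) (hρC : ρ * C = C * ρ)
    (hC : Cᴴ = C) (hCOp : C * Op - Op * C = Op) (j k : ℕ) (h : (j : ℂ) ≠ (k : ℂ)) :
    (ρ * (Opᴴ ^ j * Op ^ k)).trace = 0 := by
  have hOm : C * Opᴴ - Opᴴ * C = (-1 : ℂ) • Opᴴ := by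
    have h2 := congrArg conjTranspose hCOp
    rw [Matrix.conjTranspose_sub, Matrix.conjTranspose_mul, Matrix.conjTranspose_mul, hC] at h2
    -- h2 : Opᴴ * C - C * Opᴴ = Opᴴ
    have h3 : C * Opᴴ - Opᴴ * C = -(Opᴴ * C - C * Opᴴ) := by noncomm_ring
    rw [neg_one_smul, h3, h2]
  have hOp1 : C * Op - Op * C = (1 : ℂ) • Op := by rw [one_smul]; exact hCOp
  have hX := kt_comm_mul C (Opᴴ ^ j) (Op ^ k) _ _
    (kt_comm_pow C Opᴴ (-1) hOm j) (kt_comm_pow C Op 1 hOp1 k)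
  refine kt_trace_comm_zero ρ C _ hρC _ ?_ hX
  have he : (j : ℂ) * (-1) + (k : ℂ) * 1 = (k : ℂ) - (j : ℂ) := by ring
  rw [he]
  exact sub_ne_zero_of_ne (Ne.symm h)

end Aux

/-- For a density matrix `ρ` commuting with a Hermitian charge `C` and a raising operator
`O⁺` with `[C, O⁺] = O⁺`, the symmetrized Koma–Tasaki functionals give zero expectation
value to the order parameter `O⁽²⁾ = (O⁺ − O⁻)/(2i)`:
`χ^(m,m')(O⁽²⁾) + χ^(m',m)(O⁽²⁾) = 0`. -/
theorem ktChi_order_parameter_zero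
    {n : Type*} [Fintype n] [DecidableEq n] [Nonempty n]
    (ρ : Matrix n n ℂ) (hρ : ρ.PosSemidef) (hρtr : ρ.trace = 1)
    (C : Matrix n n ℂ) (hC : Cᴴ = C)
    (hρC : ρ * C = C * ρ)
    (Op : Matrix n n ℂ)
    (hCOp : C * Op - Op * C = Op) :
    ∀ m m' : ℕ, 0 < ktZ ρ Op m → 0 < ktZ ρ Op m' →
      ktChi ρ Op m m' ((2 * Complex.I)⁻¹ • (Op - Opᴴ))
        + ktChi ρ Op m' m ((2 * Complex.I)⁻¹ • (Op - Opᴴ)) = 0 := by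
  intro m m' hm hm'
  have hρH : ρᴴ = ρ := hρ.1
  set T : ℕ → ℕ → ℂ := fun j k => (ρ * (Opᴴ ^ j * Op ^ k)).trace with hT
  -- a = T m' (m+1), b = T m (m'+1)
  have hstar : ∀ j k, star (T j k) = T k j := fun j k => kt_star_trace ρ Op hρH j k
  have hzero : ∀ j k : ℕ, j ≠ k → T j k = 0 := by
    intro j k hjk
    exact kt_trace_zero ρ C Op hρC hC hCOp j k (by exact_mod_cast hjk)
  have key : T m' (m + 1) + T m (m' + 1) = star (T m' (m + 1) + T m (m' + 1)) := by
    rcases eq_or_ne m' (m + 1) with h1 | h1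
    · have hb : T m (m' + 1) = 0 := hzero m (m' + 1) (by omega)
      rw [hb, add_zero, h1]
      exact (hstar (m+1) (m+1)).symm
    · rcases eq_or_ne m (m' + 1) with h2 | h2
      · have ha : T m' (m + 1) = 0 := hzero m' (m + 1) (by omega)
        rw [ha, zero_add, h2]
        exact (hstar (m'+1) (m'+1)).symm
      · rw [hzero m' (m+1) h1, hzero m (m'+1) h2]
        simp
  -- Now unfold ktChi and reduce to key
  have hd : ((ktZ ρ Op m * ktZ ρ Op m' : ℝ) : ℂ) ≠ 0 := by
    exact_mod_cast (mul_pos hm hm').ne'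
  rw [ktChi, ktChi]
  rw [show ((ktZ ρ Op m' * ktZ ρ Op m : ℝ) : ℂ) = ((ktZ ρ Op m * ktZ ρ Op m' : ℝ) : ℂ) by
    push_cast; ring]
  rw [← add_div, div_eq_zero_iff]
  left
  have expand : ∀ j k : ℕ,
      (ρ * Opᴴ ^ j * ((2 * Complex.I)⁻¹ • (Op - Opᴴ)) * Op ^ k).trace
        = (2 * Complex.I)⁻¹ * (T j (k + 1) - star (T k (j + 1))) := by
    intro j k
    rw [Matrix.mul_smul, Matrix.smul_mul, Matrix.trace_smul, smul_eq_mul]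
    congr 1
    rw [Matrix.mul_sub, Matrix.sub_mul, Matrix.trace_sub]
    congr 1
    · rw [hT]
      simp only [pow_succ', Matrix.mul_assoc]
    · rw [hstar k (j+1), hT]
      simp only [pow_succ, Matrix.mul_assoc]
  rw [expand m' m, expand m m', ← mul_add]
  have : T m' (m + 1) - star (T m (m' + 1)) + (T m (m' + 1) - star (T m' (m + 1))) = 0 := by
    have := key
    rw [star_add] at this
    linear_combination this
  rw [this, mul_zero]
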